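/- Let $G=(V,E)$ be a simple graph, $k$ a field, and $k[G]$ the toric ring of $G$, defined as the image of the $k$-algebra map $\phi_G : k[E] \to k[V]$ sending the variable corresponding to an edge $e=\{x,y\}$ to the monomial $xy$. If $H$ is an induced subgraph of $G$, then the natural inclusion $k[H] \hookrightarrow k[G]$ is an algebra retract; that is, there is a surjective $k$-algebra homomorphism $\epsilon : k[G] \to k[H]$ with $\epsilon \circ \iota = \mathrm{id}_{k[H]}$, where $\iota$ is the inclusion. -/
import Mathlib


/-!
STATEMENT 0: If `H` is an induced subgraph of `G`, the natural inclusion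
`k[H] ↪ k[G]` of toric rings is an algebra retract: there is a surjective
`k`-algebra homomorphism `ε : k[G] → k[H]` with `ε ∘ ι = id`.
-/

open MvPolynomial

variable (k : Type*) [Field k] {V : Type*}

/-- The monomial `x * y` associated to an edge `e = {x, y}`. -/
noncomputable def edgeMonomial (e : Sym2 V) : MvPolynomial V k :=
  Sym2.lift ⟨fun x y => X x * X y, fun _ _ => mul_comm _ _⟩ e

/-- The monomial map `φ_G : k[E] → k[V]`, sending the edge variable `e = {x,y}` to `xy`. -/
noncomputable def toricMap (G : SimpleGraph V) :
    MvPolynomial G.edgeSet k →ₐ[k] MvPolynomial V k :=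
  aeval fun e => edgeMonomial k e.1

/-- The toric ring `k[G]`, the image of `φ_G`. -/
noncomputable def toricRing (G : SimpleGraph V) : Subalgebra k (MvPolynomial V k) :=
  (toricMap k G).range

theorem toricRing_inclusion_isRetract (G H : SimpleGraph V) (U : Set V)
    (hInd : ∀ a b, H.Adj a b ↔ (G.Adj a b ∧ a ∈ U ∧ b ∈ U)) :
    ∃ hle : toricRing k H ≤ toricRing k G,
      ∃ ε : toricRing k G →ₐ[k] toricRing k H,
        Function.Surjective ε ∧
          ∀ t : toricRing k H, ε (Subalgebra.inclusion hle t) = t := by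
  classical
  -- edges of H are edges of G
  have hsub : H.edgeSet ⊆ G.edgeSet := by
    intro e
    induction e using Sym2.ind with
    | _ a b =>
      simp only [SimpleGraph.mem_edgeSet]
      exact fun h => ((hInd a b).1 h).1
  have hle : toricRing k H ≤ toricRing k G := by
    rintro x ⟨p, rfl⟩
    refine ⟨rename (fun e : H.edgeSet => (⟨e.1, hsub e.2⟩ : G.edgeSet)) p, ?_⟩
    show (toricMap k G).comp (rename _) p = toricMap k H p
    congr 1
    ext e
    simp [toricMap]
  -- projection map
  set π : MvPolynomial V k →ₐ[k] MvPolynomial V k :=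
    aeval (fun v => if v ∈ U then X v else 0) with hπ
  have hBfix : ∀ e ∈ H.edgeSet, π (edgeMonomial k e) = edgeMonomial k e := by
    intro e
    induction e using Sym2.ind with
    | _ a b =>
      intro he
      rw [SimpleGraph.mem_edgeSet] at he
      obtain ⟨_, ha, hb⟩ := (hInd a b).1 he
      simp [edgeMonomial, hπ, ha, hb]
  have hC : ∀ e ∈ G.edgeSet, π (edgeMonomial k e) ∈ toricRing k H := by
    intro e
    induction e using Sym2.ind with
    | _ a b =>
      intro he
      rw [SimpleGraph.mem_edgeSet] at he
      by_cases ha : a ∈ U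
      · by_cases hb : b ∈ U
        · have hH : H.Adj a b := (hInd a b).2 ⟨he, ha, hb⟩
          have : edgeMonomial k (s(a, b)) ∈ toricRing k H := by
            refine ⟨X (⟨s(a, b), hH⟩ : H.edgeSet), ?_⟩
            simp [toricMap]
          simpa [edgeMonomial, hπ, ha, hb] using this
        · simp [edgeMonomial, hπ, hb, Subalgebra.zero_mem]
      · simp [edgeMonomial, hπ, ha, Subalgebra.zero_mem]
  have hmaps : ∀ x : toricRing k G, π x.1 ∈ toricRing k H := by
    rintro ⟨x, p, rfl⟩
    show π (toricMap k G p) ∈ toricRing k H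
    have : π (toricMap k G p) =
        aeval (fun e : G.edgeSet => π (edgeMonomial k e.1)) p := by
      rw [show π (toricMap k G p) = (π.comp (toricMap k G)) p from rfl]
      congr 1
      ext e
      simp [toricMap]
    rw [this]
    have h1 : aeval (fun e : G.edgeSet => π (edgeMonomial k e.1)) p ∈
        Algebra.adjoin k (Set.range (fun e : G.edgeSet => π (edgeMonomial k e.1))) := by
      rw [Algebra.adjoin_range_eq_range_aeval]
      exact ⟨p, rfl⟩
    refine Algebra.adjoin_le ?_ h1
    rintro _ ⟨e, rfl⟩
    exact hC e.1 e.2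
  have hfix : ∀ t : toricRing k H, π t.1 = t.1 := by
    rintro ⟨x, p, rfl⟩
    show π (toricMap k H p) = toricMap k H p
    rw [show π (toricMap k H p) = (π.comp (toricMap k H)) p from rfl]
    congr 1
    apply MvPolynomial.algHom_ext
    intro e
    simpa [toricMap] using hBfix e.1 e.2
  refine ⟨hle, AlgHom.codRestrict (π.comp (toricRing k G).val) (toricRing k H) hmaps,
    ?_, ?_⟩
  · intro t
    exact ⟨Subalgebra.inclusion hle t, Subtype.ext (hfix t)⟩
  · intro t
    exact Subtype.ext (hfix t)
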